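/- Let F be a finite field, ω ∈ F of multiplicative order n, and suppose n = r₁·r₂. Write each index j as j = j₁r₁ + j₀ with 0 ≤ j₀ < r₁, 0 ≤ j₁ < r₂, and each index i as i = i₁r₂ + i₀ with 0 ≤ i₀ < r₂, 0 ≤ i₁ < r₁. Define x₁(j₀, i₀) = ∑_{i₁=0}^{r₁-1} v_{i₁r₂+i₀} · ω^{j₀ i₁ r₂}. Then the DFT satisfies V_{j₁r₁+j₀} = ∑_{i₀=0}^{r₂-1} x₁(j₀, i₀) · ω^{(j₁r₁+j₀) i₀}. -/

import Mathlib

lemma sum_range_mul_decomp {M : Type*} [AddCommMonoid M] (r₁ r₂ : ℕ) (hr₂ : 0 < r₂)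
    (f : ℕ → M) :
    ∑ i ∈ Finset.range (r₁ * r₂), f i =
      ∑ i₀ ∈ Finset.range r₂, ∑ i₁ ∈ Finset.range r₁, f (i₁ * r₂ + i₀) := by
  rw [← Finset.sum_product']
  apply Finset.sum_nbij' (fun i => (i % r₂, i / r₂)) (fun p => p.2 * r₂ + p.1)
  · intro i hi
    simp only [Finset.mem_range] at hi
    simp only [Finset.mem_product, Finset.mem_range]
    exact ⟨Nat.mod_lt _ hr₂, Nat.div_lt_of_lt_mul (by rwa [mul_comm])⟩
  · intro p hp
    simp only [Finset.mem_product, Finset.mem_range] at hp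
    simp only [Finset.mem_range]
    calc p.2 * r₂ + p.1 < p.2 * r₂ + r₂ := by omega
    _ ≤ r₁ * r₂ := by nlinarith [hp.1, hp.2]
  · intro i _
    simp only
    exact Nat.div_add_mod' i r₂
  · intro p hp
    simp only [Finset.mem_product, Finset.mem_range] at hp
    simp only [Prod.ext_iff]
    refine ⟨?_, ?_⟩
    · rw [mul_comm, Nat.mul_add_mod, Nat.mod_eq_of_lt hp.1]
    · rw [mul_comm, Nat.mul_add_div hr₂, Nat.div_eq_of_lt hp.1, add_zero]
  · intro i _
    congr 1
    simp only
    exact (Nat.div_add_mod' i r₂).symm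

theorem cooley_tukey_one_stage {F : Type*} [Field F] [Fintype F]
    (n r₁ r₂ : ℕ) (hr₁ : 0 < r₁) (hr₂ : 0 < r₂) (hn : n = r₁ * r₂)
    (ω : F) (hω : orderOf ω = n)
    (v V : ℕ → F) (hV : ∀ j, V j = ∑ i ∈ Finset.range n, ω ^ (i * j) * v i)
    (j₀ j₁ : ℕ) (hj₀ : j₀ < r₁) (hj₁ : j₁ < r₂) :
    V (j₁ * r₁ + j₀) =
      ∑ i₀ ∈ Finset.range r₂,
        (∑ i₁ ∈ Finset.range r₁, v (i₁ * r₂ + i₀) * ω ^ (j₀ * i₁ * r₂))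
          * ω ^ ((j₁ * r₁ + j₀) * i₀) := by
  have hωn : ω ^ n = 1 := by rw [← hω]; exact pow_orderOf_eq_one ω
  rw [hV, hn, sum_range_mul_decomp r₁ r₂ hr₂]
  apply Finset.sum_congr rfl
  intro i₀ _
  rw [Finset.sum_mul]
  apply Finset.sum_congr rfl
  intro i₁ _
  have key : ω ^ ((i₁ * r₂ + i₀) * (j₁ * r₁ + j₀)) =
      ω ^ (j₀ * i₁ * r₂) * ω ^ ((j₁ * r₁ + j₀) * i₀) := by
    have : (i₁ * r₂ + i₀) * (j₁ * r₁ + j₀) =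
        (r₁ * r₂) * (i₁ * j₁) + (j₀ * i₁ * r₂ + (j₁ * r₁ + j₀) * i₀) := by ring
    rw [this, pow_add, pow_mul, ← hn, hωn, one_pow, one_mul, pow_add]
  rw [key]; ring
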